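/- Let K : [0,∞) → (0,1] be continuous, non-increasing, with K(0) = 1 and K(t) < 1 for all t > 0. If the baseline-corrected diversity satisfies the three-point adjacent-gap additivity E_K({0, a, a+b}) = E_K({0,a}) + E_K({0,b}) for all a, b > 0, then K(t) = e^{-βt} with β = -log K(1) > 0. -/

import Mathlib

/-- Baseline-corrected two-point diversity `E_K({0,t})` via the inverse similarity matrix. -/
noncomputable def excessTwo (K : ℝ → ℝ) (t : ℝ) : ℝ :=
  (∑ i, ∑ j, (!![(1 : ℝ), K t; K t, 1])⁻¹ i j) - 1

/-- Baseline-corrected three-point diversity `E_K({0,a,a+b})` via the inverse similarity matrix. -/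
noncomputable def excessThree (K : ℝ → ℝ) (a b : ℝ) : ℝ :=
  (∑ i, ∑ j, (!![(1 : ℝ), K a, K (a + b); K a, 1, K b; K (a + b), K b, 1])⁻¹ i j) - 1

lemma excessTwo_eq' (K : ℝ → ℝ) (t : ℝ) :
    excessTwo K t = (1 - K t * K t)⁻¹ * (2 - 2 * K t) - 1 := by
  unfold excessTwo
  rw [Matrix.inv_def, Matrix.adjugate_fin_two_of, Matrix.det_fin_two_of, Ring.inverse_eq_inv]
  simp [Fin.sum_univ_two]
  ring

lemma excessThree_eq' (K : ℝ → ℝ) (a b : ℝ) :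
    excessThree K a b = (1 - K a ^ 2 - K b ^ 2 - K (a + b) ^ 2 + 2 * K a * K b * K (a + b))⁻¹ *
      (3 - K a ^ 2 - K b ^ 2 - K (a + b) ^ 2 - 2 * K a - 2 * K b - 2 * K (a + b)
        + 2 * K a * K b + 2 * K b * K (a + b) + 2 * K a * K (a + b)) - 1 := by
  unfold excessThree
  rw [Matrix.inv_def, Matrix.adjugate_fin_three_of, Matrix.det_fin_three, Ring.inverse_eq_inv]
  simp [Fin.sum_univ_three]
  ring

lemma key_alg (x y z : ℝ) (hx0 : 0 < x) (hx1 : x < 1) (hy0 : 0 < y) (hy1 : y < 1)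
    (hzx : z ≤ x) (hzy : z ≤ y)
    (h : (1 - x ^ 2 - y ^ 2 - z ^ 2 + 2 * x * y * z)⁻¹ *
      (3 - x ^ 2 - y ^ 2 - z ^ 2 - 2 * x - 2 * y - 2 * z
        + 2 * x * y + 2 * y * z + 2 * x * z) - 1
      = ((1 - x * x)⁻¹ * (2 - 2 * x) - 1) + ((1 - y * y)⁻¹ * (2 - 2 * y) - 1)) :
    z = x * y := by
  have hx1' : (1 : ℝ) - x * x ≠ 0 := by nlinarith
  have hy1' : (1 : ℝ) - y * y ≠ 0 := by nlinarith
  have hxy1 : 0 < 1 - x * y := by nlinarith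
  rcases eq_or_ne (1 - x ^ 2 - y ^ 2 - z ^ 2 + 2 * x * y * z) 0 with hd | hd
  · rw [hd] at h
    simp at h
    have e1 : 0 < (1 - x * x)⁻¹ * (2 - 2 * x) - 1 + ((1 - y * y)⁻¹ * (2 - 2 * y) - 1) + 1 := by
      have a1 : (1 - x * x)⁻¹ * (2 - 2 * x) = (1 - x) / (1 + x) + 1 := by
        rw [inv_mul_eq_div, div_add_one (by linarith : (1:ℝ) + x ≠ 0),
          div_eq_div_iff (by nlinarith : (1:ℝ) - x * x ≠ 0) (by linarith : (1:ℝ) + x ≠ 0)]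
        ring
      have a2 : (1 - y * y)⁻¹ * (2 - 2 * y) = (1 - y) / (1 + y) + 1 := by
        rw [inv_mul_eq_div, div_add_one (by linarith : (1:ℝ) + y ≠ 0),
          div_eq_div_iff (by nlinarith : (1:ℝ) - y * y ≠ 0) (by linarith : (1:ℝ) + y ≠ 0)]
        ring
      rw [a1, a2]
      have : 0 ≤ (1 - x) / (1 + x) := div_nonneg (by linarith) (by linarith)
      have : 0 ≤ (1 - y) / (1 + y) := div_nonneg (by linarith) (by linarith)
      linarith
    linarith
  have hx2 : (1:ℝ) - x ^ 2 ≠ 0 := by nlinarith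
  have hy2 : (1:ℝ) - y ^ 2 ≠ 0 := by nlinarith
  have hd' : (1 - x ^ 2 - y ^ 2 - z ^ 2 + x * y * z * 2) ≠ 0 := by convert hd using 1; ring
  field_simp at h
  have key2 : 2 * (z - x * y) * ((1 - x * y) * z - (1 + x * y - x ^ 2 - y ^ 2))
      * ((1 - x) * (1 - y)) = 0 := by linear_combination h
  clear h
  have hfac : (1 - x * y) * z - (1 + x * y - x ^ 2 - y ^ 2) < 0 := by
    rcases le_total x y with hxy | hxy
    · have h1 : (1 - x * y) * z ≤ (1 - x * y) * x := by nlinarith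
      have h2 : (1 - x * y) * x < 1 + x * y - x ^ 2 - y ^ 2 := by
        nlinarith [mul_pos (sub_pos.2 hy1) (show (0:ℝ) < 1 + y - x - x ^ 2 by nlinarith)]
      linarith
    · have h1 : (1 - x * y) * z ≤ (1 - x * y) * y := by nlinarith
      have h2 : (1 - x * y) * y < 1 + x * y - x ^ 2 - y ^ 2 := by
        nlinarith [mul_pos (sub_pos.2 hx1) (show (0:ℝ) < 1 + x - y - y ^ 2 by nlinarith)]
      linarith
  have hne : ((1 - x) * (1 - y)) ≠ 0 :=
    ne_of_gt (mul_pos (by linarith) (by linarith))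
  rcases mul_eq_zero.1 key2 with h1 | h2
  · rcases mul_eq_zero.1 h1 with h' | h'
    · rcases mul_eq_zero.1 h' with h'' | h''
      · norm_num at h''
      · linarith
    · linarith
  · exact absurd h2 hne

lemma exp_of_mul (K : ℝ → ℝ)
    (hcont : ContinuousOn K (Set.Ici 0))
    (hpos : ∀ t, 0 ≤ t → 0 < K t)
    (hmul : ∀ a b : ℝ, 0 ≤ a → 0 ≤ b → K (a + b) = K a * K b) :
    ∀ t, 0 ≤ t → K t = Real.exp (Real.log (K 1) * t) := by
  have hpow : ∀ (n : ℕ) (s : ℝ), 0 ≤ s → K (n * s) = K s ^ n := by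
    intro n
    induction n with
    | zero =>
      intro s hs
      have h0 : K 0 = 1 := by
        have h := hmul 0 0 le_rfl le_rfl
        norm_num at h
        have h0pos := hpos 0 le_rfl
        have h' : K 0 * 1 = K 0 * K 0 := by rw [mul_one]; exact h
        exact (mul_left_cancel₀ (ne_of_gt h0pos) h').symm
      simpa using h0
    | succ n ih =>
      intro s hs
      have : ((n : ℝ) + 1) * s = (n : ℝ) * s + s := by ring
      push_cast
      rw [this, hmul ((n:ℝ) * s) s (by positivity) hs, ih s hs, pow_succ]
  have hrat : ∀ q : ℚ, 0 ≤ q → K q = Real.exp (Real.log (K 1) * q) := by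
    intro q hq
    have hq' : (0:ℝ) ≤ (q:ℝ) := by exact_mod_cast hq
    have hden : ((q.den : ℝ)) * (q : ℝ) = ((q.num.toNat : ℕ) : ℝ) := by
      have h1 : ((q.num.toNat : ℤ) : ℝ) = (q.num : ℝ) := by
        norm_cast
        exact Int.toNat_of_nonneg (Rat.num_nonneg.2 hq)
      rw [Rat.cast_def]
      field_simp
      push_cast at h1 ⊢
      linarith [h1]
    have hkey : K q ^ q.den = K 1 ^ q.num.toNat := by
      rw [← hpow q.den q hq', hden]
      have : ((q.num.toNat : ℕ) : ℝ) = (q.num.toNat : ℝ) * 1 := by ring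
      rw [this, hpow q.num.toNat 1 zero_le_one]
    have hlog : (q.den : ℝ) * Real.log (K q) = (q.num.toNat : ℝ) * Real.log (K 1) := by
      have := congrArg Real.log hkey
      rwa [Real.log_pow, Real.log_pow] at this
    have hdenne : (q.den : ℝ) ≠ 0 := by positivity
    have : Real.log (K q) = Real.log (K 1) * q := by
      apply mul_left_cancel₀ hdenne
      rw [hlog, show ((q.den:ℝ)) * (Real.log (K 1) * q) = Real.log (K 1) * ((q.den:ℝ) * q) by ring,
        hden]
      ring
    rw [← this, Real.exp_log (hpos q hq')]
  have hdense : Set.Ici (0:ℝ) ⊆ closure ((fun q : ℚ => (q:ℝ)) '' {q | 0 ≤ q}) := by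
    intro t ht
    rw [Metric.mem_closure_iff]
    intro ε hε
    obtain ⟨q, hq1, hq2⟩ := exists_rat_btwn (show t < t + ε by linarith)
    refine ⟨(q:ℝ), ⟨q, ?_, rfl⟩, ?_⟩
    · have : (0:ℝ) ≤ (q:ℝ) := le_of_lt (lt_of_le_of_lt ht hq1)
      exact_mod_cast this
    · rw [Real.dist_eq, abs_lt]
      constructor <;> linarith
  have heq : Set.EqOn K (fun t => Real.exp (Real.log (K 1) * t)) (Set.Ici 0) := by
    apply Set.EqOn.of_subset_closure _ hcont _ _ hdense
    · rintro x ⟨q, hq, rfl⟩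
      exact hrat q hq
    · exact (Real.continuous_exp.comp (continuous_const.mul continuous_id)).continuousOn
    · rintro x ⟨q, hq, rfl⟩
      have : (0:ℝ) ≤ (q:ℝ) := by exact_mod_cast hq
      exact this
  exact fun t ht => heq ht

/-- Adjacent-gap additivity of the baseline-corrected diversity forces the
exponential kernel family, with `β = -log K 1 > 0`. -/
theorem stmt_12 (K : ℝ → ℝ)
    (hcont : ContinuousOn K (Set.Ici 0))
    (hanti : AntitoneOn K (Set.Ici 0))
    (hrange : ∀ t, 0 ≤ t → K t ∈ Set.Ioc (0 : ℝ) 1)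
    (hK0 : K 0 = 1)
    (hlt : ∀ t, 0 < t → K t < 1)
    (hadd : ∀ a b : ℝ, 0 < a → 0 < b →
      excessThree K a b = excessTwo K a + excessTwo K b) :
    0 < -Real.log (K 1) ∧
    ∀ t, 0 ≤ t → K t = Real.exp (-(-Real.log (K 1)) * t) := by
  have hpos : ∀ t, 0 ≤ t → 0 < K t := fun t ht => (hrange t ht).1
  have hmul : ∀ a b : ℝ, 0 ≤ a → 0 ≤ b → K (a + b) = K a * K b := by
    intro a b ha hb
    rcases ha.eq_or_lt with ha0 | ha0
    · rw [← ha0, zero_add, hK0, one_mul]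
    rcases hb.eq_or_lt with hb0 | hb0
    · rw [← hb0, add_zero, hK0, mul_one]
    have h := hadd a b ha0 hb0
    rw [excessThree_eq', excessTwo_eq', excessTwo_eq'] at h
    exact key_alg (K a) (K b) (K (a + b)) (hpos a ha) (hlt a ha0) (hpos b hb)
      (hlt b hb0)
      (hanti (Set.mem_Ici.2 ha) (Set.mem_Ici.2 (by linarith)) (by linarith))
      (hanti (Set.mem_Ici.2 hb) (Set.mem_Ici.2 (by linarith)) (by linarith))
      h
  have hform := exp_of_mul K hcont hpos hmul
  have hlogneg : Real.log (K 1) < 0 :=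
    Real.log_neg (hpos 1 zero_le_one) (hlt 1 one_pos)
  refine ⟨by linarith, fun t ht => ?_⟩
  rw [hform t ht]
  ring_nf
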